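/- Let H be a subtree hypergraph with underlying tree T rooted at r, and let f be a hyperedge maximizing the distance from r to top(f), where top(f) is the vertex of f closest to r. Then every hyperedge of H that intersects f contains top(f). -/

import Mathlib

open SimpleGraph Walk

/-- In a tree, every path between two vertices has length equal to the distance. -/
private lemma tree_path_length {V : Type*} {G : SimpleGraph V} (hT : G.IsTree) {a b : V}
    {p : G.Walk a b} (hp : p.IsPath) : p.length = G.dist a b := by
  obtain ⟨q, hq, hql⟩ := hT.isConnected.exists_path_of_dist a b
  have : (⟨p, hp⟩ : G.Path a b) = ⟨q, hq⟩ := hT.IsAcyclic.path_unique _ _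
  rw [show p = q from congrArg Subtype.val this, hql]

/-- First vertex on a walk satisfying a predicate that holds at the end. -/
private lemma exists_first {V : Type*} {G : SimpleGraph V} (P : V → Prop) :
    ∀ {t v : V} (q : G.Walk t v), P v →
    ∃ m, P m ∧ ∃ (q1 : G.Walk t m) (q2 : G.Walk m v),
      q = q1.append q2 ∧ (∀ x ∈ q1.support, P x → x = m)
  | t, _, .nil, hv => ⟨t, hv, .nil, .nil, rfl, fun x hx _ => by simpa using hx⟩
  | t, v, .cons h q, hv => by
      by_cases ha : P t
      · exact ⟨t, ha, .nil, .cons h q, rfl, fun x hx _ => by simpa using hx⟩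
      · obtain ⟨m, hm, q1, q2, heq, hfirst⟩ := exists_first P q hv
        refine ⟨m, hm, .cons h q1, q2, by rw [heq, Walk.cons_append], ?_⟩
        intro x hx hPx
        rcases (by simpa using hx : x = t ∨ x ∈ q1.support) with rfl | hx'
        · exact absurd hPx ha
        · exact hfirst x hx' hPx

/-- If the induced graph on `S` is connected, any two vertices of `S` are joined by a
path whose support lies in `S`. -/
private lemma walk_in_set {V : Type*} [DecidableEq V] {G : SimpleGraph V} {S : Set V}
    (hS : (G.induce S).Connected) {a b : V} (ha : a ∈ S) (hb : b ∈ S) :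
    ∃ p : G.Walk a b, p.IsPath ∧ ∀ x ∈ p.support, x ∈ S := by
  obtain ⟨w⟩ := hS.preconnected ⟨a, ha⟩ ⟨b, hb⟩
  refine ⟨(w.map (SimpleGraph.Embedding.induce S).toHom).bypass, Walk.bypass_isPath _, ?_⟩
  intro x hx
  have hx' := Walk.support_bypass_subset _ hx
  erw [Walk.support_map] at hx'
  obtain ⟨y, _, rfl⟩ := List.mem_map.mp hx'
  exact y.2

/-- The minimum-distance vertex of a connected induced set lies on any path from
`r` to a vertex of the set. -/
private lemma top_mem_path {V : Type*} [DecidableEq V] {G : SimpleGraph V} (hT : G.IsTree)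
    {S : Set V} (hS : (G.induce S).Connected) {r t v : V}
    (ht : t ∈ S) (hv : v ∈ S) (hmin : ∀ u ∈ S, G.dist r t ≤ G.dist r u)
    (p : G.Walk r v) (hp : p.IsPath) : t ∈ p.support := by
  obtain ⟨q, hq, hqS⟩ := walk_in_set hS ht hv
  obtain ⟨m, hmp, q1, q2, heq, hfirst⟩ :=
    exists_first (fun x => x ∈ p.support) q (Walk.end_mem_support p)
  have hq1 : q1.IsPath := by
    have := heq ▸ hq
    exact this.of_append_left
  have hmS : m ∈ S := hqS m (heq ▸ (Walk.mem_support_append_iff _ _).mpr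
    (Or.inl (Walk.end_mem_support q1)))
  -- the combined walk r → m → t
  set A := p.takeUntil m hmp with hA
  have hApath : A.IsPath := hp.takeUntil hmp
  have hBpath : q1.reverse.IsPath := hq1.reverse
  have hc : (A.append q1.reverse).IsPath := by
    rw [Walk.isPath_def, Walk.support_append]
    refine List.Nodup.append ((Walk.isPath_def _).mp hApath)
      (((Walk.isPath_def _).mp hBpath).tail) ?_
    intro x hxA hxB
    have hxq1 : x ∈ q1.support := by
      have : x ∈ q1.reverse.support := List.mem_of_mem_tail hxB
      rwa [Walk.support_reverse, List.mem_reverse] at this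
    have hxp : x ∈ p.support := Walk.support_takeUntil_subset p hmp hxA
    have hxm : x = m := hfirst x hxq1 hxp
    -- but m is the head of q1.reverse.support, not in the tail (nodup)
    have hnodup := (Walk.isPath_def _).mp hBpath
    rw [Walk.support_eq_cons q1.reverse] at hnodup
    exact (List.nodup_cons.mp hnodup).1 (hxm ▸ hxB)
  have hclen : (A.append q1.reverse).length = G.dist r t := tree_path_length hT hc
  rw [Walk.length_append, Walk.length_reverse] at hclen
  have hAlen : A.length = G.dist r m := tree_path_length hT hApath
  have hle : G.dist r t ≤ G.dist r m := hmin m hmS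
  have : q1.length = 0 := by omega
  have htm : t = m := Walk.eq_of_length_eq_zero this
  exact htm ▸ hmp

/-- in a subtree hypergraph with underlying tree `G` rooted at `r`, if `f` is a
hyperedge maximizing the distance from `r` to its top vertex, then every hyperedge
intersecting `f` contains the top vertex of `f`. -/
theorem subtree_farthest_edge_top {V : Type*} [Fintype V] [DecidableEq V]
    (G : SimpleGraph V) (hT : G.IsTree)
    (E : Finset (Finset V)) (hne : ∀ e ∈ E, e.Nonempty)
    (hsub : ∀ e ∈ E, (G.induce (e : Set V)).Connected)
    (r : V)
    (f : Finset V) (hfE : f ∈ E)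
    (tf : V) (htf : tf ∈ f) (htfmin : ∀ v ∈ f, G.dist r tf ≤ G.dist r v)
    (hmax : ∀ e ∈ E, ∀ te ∈ e, (∀ v ∈ e, G.dist r te ≤ G.dist r v) →
      G.dist r te ≤ G.dist r tf) :
    ∀ e ∈ E, ∀ v ∈ e, v ∈ f → tf ∈ e := by
  intro e he v hv hvf
  -- top vertex of e
  obtain ⟨te, hte, htemin⟩ := Finset.exists_min_image e (G.dist r) (hne e he)
  have hdist : G.dist r te ≤ G.dist r tf := hmax e he te hte htemin
  -- path from r to v
  obtain ⟨p, hp, _⟩ := hT.isConnected.exists_path_of_dist r v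
  -- tf and te are on p
  have htfp : tf ∈ p.support :=
    top_mem_path hT (hsub f hfE) htf hvf (fun u hu => htfmin u hu) p hp
  have htep : te ∈ p.support :=
    top_mem_path hT (hsub e he) hte hv (fun u hu => htemin u hu) p hp
  -- tf lies on the segment of p from te to v
  set p2 := p.dropUntil te htep with hp2
  have hp2path : p2.IsPath := hp.dropUntil htep
  have htfp2 : tf ∈ p2.support := by
    have := htfp
    rw [← Walk.take_spec p htep] at this
    rcases (Walk.mem_support_append_iff _ _).mp this with h1 | h2
    · -- tf in prefix: then tf = te
      set A := p.takeUntil te htep with hA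
      have hApath : A.IsPath := hp.takeUntil htep
      have hAlen : A.length = G.dist r te := tree_path_length hT hApath
      have hA1 : (A.takeUntil tf h1).IsPath := hApath.takeUntil h1
      have hA1len : (A.takeUntil tf h1).length = G.dist r tf := tree_path_length hT hA1
      have hsplit : (A.takeUntil tf h1).length + (A.dropUntil tf h1).length = A.length := by
        conv_rhs => rw [← Walk.take_spec A h1]
        rw [Walk.length_append]
      have hzero : (A.dropUntil tf h1).length = 0 := by omega
      have : tf = te := Walk.eq_of_length_eq_zero hzero
      exact this ▸ Walk.start_mem_support p2
    · exact h2
  -- the segment from te to v is the unique path, contained in e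
  obtain ⟨q, hq, hqe⟩ := walk_in_set (hsub e he) (by exact_mod_cast hte) (by exact_mod_cast hv)
  have : (⟨p2, hp2path⟩ : G.Path te v) = ⟨q, hq⟩ := hT.IsAcyclic.path_unique _ _
  have hpq : p2 = q := congrArg Subtype.val this
  have := hqe tf (hpq ▸ htfp2)
  exact_mod_cast this
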